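/- Let K be the field of fractions of the polynomial ring ℚ[x,y], and let d be a ℚ-linear derivation of K satisfying d(x) = xy and d(y) = xy. Then for every n ≥ 0, d^n(x^{-1}y) = x^{-1} y (x - y)^n. -/

import Mathlib

open MvPolynomial

/-- The field of fractions of `ℚ[x,y]`. -/
abbrev FracK : Type := FractionRing (MvPolynomial (Fin 2) ℚ)

/-- The image of the variable `x` in the field of fractions of `ℚ[x,y]`. -/
noncomputable def xK : FracK := algebraMap (MvPolynomial (Fin 2) ℚ) FracK (X 0)

/-- The image of the variable `y` in the field of fractions of `ℚ[x,y]`. -/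
noncomputable def yK : FracK := algebraMap (MvPolynomial (Fin 2) ℚ) FracK (X 1)

lemma xK_ne_zero : xK ≠ 0 := by
  unfold xK
  rw [map_ne_zero_iff _ (IsFractionRing.injective _ _)]
  exact X_ne_zero 0

theorem stmt3 (d : Derivation ℚ FracK FracK)
    (hx : d xK = xK * yK) (hy : d yK = xK * yK) (n : ℕ) :
    (⇑d)^[n] (xK⁻¹ * yK) = xK⁻¹ * yK * (xK - yK) ^ n := by
  have hxy : d (xK - yK) = 0 := by rw [map_sub, hx, hy, sub_self]
  have hinv : d xK⁻¹ = -(xK⁻¹ * yK) := by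
    rw [Derivation.leibniz_inv, hx]
    field_simp [xK_ne_zero]
    linear_combination (-yK * (xK * xK⁻¹ + 1)) * mul_inv_cancel₀ xK_ne_zero
  induction n with
  | zero => simp
  | succ n ih =>
    rw [Function.iterate_succ_apply', ih, Derivation.leibniz, Derivation.leibniz_pow,
      hxy, Derivation.leibniz, hinv, hy]
    have h := xK_ne_zero
    field_simp
    linear_combination (xK * yK - yK ^ 2) * (xK - yK) ^ n * mul_inv_cancel₀ h
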